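/- Let E be a Banach lattice and let S be a positive and irreducible semigroup on E such that for each f ∈ E the limit Pf := lim_{t→∞} S(t)f exists in E. Then either P = 0, or there exist a quasi-interior point u of the positive cone E₊ and a strictly positive functional φ ∈ E' such that Pf = ⟨φ, f⟩ u for each f ∈ E; in the latter case ⟨φ, u⟩ = 1. -/

import Mathlib

open Filter Topology Set

/-- `u` is a quasi-interior point of the positive cone `E₊`:
`u ≥ 0` and `v ⊓ (n • u) → v` for each `v ≥ 0`. -/
def IsQuasiInteriorPoint {E : Type*} [NormedAddCommGroup E] [Lattice E] [HasSolidNorm E]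
    [IsOrderedAddMonoid E] (u : E) : Prop :=
  0 ≤ u ∧ ∀ v : E, 0 ≤ v →
    Filter.Tendsto (fun n : ℕ => v ⊓ (n • u)) Filter.atTop (nhds v)

section Aux

set_option linter.unusedSectionVars false

variable {E : Type*} [NormedAddCommGroup E] [Lattice E] [HasSolidNorm E] [IsOrderedAddMonoid E]
  [NormedSpace ℝ E]

lemma pow2_semiclosed (k : ℕ) {a : E} (h : 0 ≤ (2 ^ k) • a) : 0 ≤ a := by
  induction k with
  | zero => simpa using h
  | succ n ih =>
    refine ih (nsmul_two_semiclosed ?_)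
    have : (2 ^ (n + 1)) • a = 2 • (2 ^ n • a) := by
      rw [pow_succ, mul_nsmul]
    rwa [this] at h

lemma real_smul_nonneg {c : ℝ} (hc : 0 ≤ c) {x : E} (hx : 0 ≤ x) : 0 ≤ c • x := by
  have dyadic : ∀ (m k : ℕ), 0 ≤ ((m : ℝ) / 2 ^ k) • x := by
    intro m k
    refine pow2_semiclosed k ?_
    have h1 : (2 ^ k) • (((m : ℝ) / 2 ^ k) • x) = (m : ℕ) • x := by
      rw [← Nat.cast_smul_eq_nsmul ℝ (2 ^ k), ← Nat.cast_smul_eq_nsmul ℝ m, smul_smul]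
      congr 1
      push_cast
      field_simp
    rw [h1]
    exact nsmul_nonneg hx m
  have hcont : Continuous fun c : ℝ => c • x := by continuity
  have htend : Tendsto (fun n : ℕ => ((⌈c * 2 ^ n⌉₊ : ℝ) / 2 ^ n) • x) atTop (𝓝 (c • x)) := by
    refine (hcont.tendsto c).comp ?_
    rw [Metric.tendsto_atTop]
    intro ε hε
    obtain ⟨N, hN⟩ := pow_unbounded_of_one_lt (1 / ε) (one_lt_two (α := ℝ))
    refine ⟨N, fun n hn => ?_⟩
    have h2n : (0:ℝ) < 2 ^ n := by positivity
    have h2N : (0:ℝ) < 2 ^ N := by positivity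
    set d : ℝ := (⌈c * 2 ^ n⌉₊ : ℝ) / 2 ^ n with hd
    have hd1 : c ≤ d := by
      rw [hd, le_div_iff₀ h2n]
      exact Nat.le_ceil _
    have hmul : d * 2 ^ n = (⌈c * 2 ^ n⌉₊ : ℝ) := by
      rw [hd]; field_simp
    have hceil : (⌈c * 2 ^ n⌉₊ : ℝ) < c * 2 ^ n + 1 :=
      Nat.ceil_lt_add_one (by positivity)
    have he : (1 / 2 ^ n : ℝ) * 2 ^ n = 1 := by field_simp
    have hd2 : d - c < 1 / 2 ^ n := by nlinarith
    have hNn : (1:ℝ) / 2 ^ n ≤ 1 / 2 ^ N := by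
      apply one_div_le_one_div_of_le h2N
      exact pow_le_pow_right₀ one_le_two hn
    have hNε : (1:ℝ) / 2 ^ N < ε := by
      rw [div_lt_iff₀ h2N]
      rw [div_lt_iff₀ hε] at hN
      linarith
    rw [Real.dist_eq, abs_of_nonneg (by linarith)]
    linarith
  exact ge_of_tendsto htend (Eventually.of_forall fun n => dyadic _ _)

lemma real_smul_le_smul {c : ℝ} (hc : 0 ≤ c) {x y : E} (h : x ≤ y) : c • x ≤ c • y := by
  have := real_smul_nonneg hc (sub_nonneg.2 h)
  rwa [smul_sub, sub_nonneg] at this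

lemma real_smul_inf {c : ℝ} (hc : 0 ≤ c) (x y : E) : c • (x ⊓ y) = (c • x) ⊓ (c • y) := by
  rcases eq_or_lt_of_le hc with rfl | hc
  · simp
  refine le_antisymm (le_inf (real_smul_le_smul hc.le inf_le_left)
    (real_smul_le_smul hc.le inf_le_right)) ?_
  have hkey : c⁻¹ • ((c • x) ⊓ (c • y)) ≤ x ⊓ y := by
    refine le_inf ?_ ?_
    · have := real_smul_le_smul (inv_nonneg.2 hc.le) (inf_le_left (a := c • x) (b := c • y))
      rwa [inv_smul_smul₀ hc.ne'] at this
    · have := real_smul_le_smul (inv_nonneg.2 hc.le) (inf_le_right (a := c • x) (b := c • y))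
      rwa [inv_smul_smul₀ hc.ne'] at this
  have := real_smul_le_smul hc.le hkey
  rwa [smul_inv_smul₀ hc.ne'] at this

lemma real_smul_sup {c : ℝ} (hc : 0 ≤ c) (x y : E) : c • (x ⊔ y) = (c • x) ⊔ (c • y) := by
  rcases eq_or_lt_of_le hc with rfl | hc
  · simp
  refine le_antisymm ?_ (sup_le (real_smul_le_smul hc.le le_sup_left)
    (real_smul_le_smul hc.le le_sup_right))
  have hkey : x ⊔ y ≤ c⁻¹ • ((c • x) ⊔ (c • y)) := by
    refine sup_le ?_ ?_
    · have := real_smul_le_smul (inv_nonneg.2 hc.le) (le_sup_left (a := c • x) (b := c • y))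
      rwa [inv_smul_smul₀ hc.ne'] at this
    · have := real_smul_le_smul (inv_nonneg.2 hc.le) (le_sup_right (a := c • x) (b := c • y))
      rwa [inv_smul_smul₀ hc.ne'] at this
  have := real_smul_le_smul hc.le hkey
  rwa [smul_inv_smul₀ hc.ne'] at this

lemma real_smul_posPart {c : ℝ} (hc : 0 ≤ c) (x : E) : (c • x)⁺ = c • x⁺ := by
  rw [posPart_def, posPart_def, real_smul_sup hc, smul_zero]

lemma real_smul_abs {c : ℝ} (hc : 0 ≤ c) (x : E) : |c • x| = c • |x| := by
  rw [abs, abs, real_smul_sup hc, smul_neg]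

lemma posPart_le_abs' (a : E) : a⁺ ≤ |a| := by
  rw [posPart_def]
  exact sup_le (le_abs_self a) (abs_nonneg a)

lemma sub_inf_eq_posPart (a b : E) : a - a ⊓ b = (a - b)⁺ := by
  have h := inf_add_sup a b
  have h2 : (a - b)⁺ = a ⊔ b - b := by
    rw [posPart_def, ← sub_self b, ← sup_sub]
  rw [h2, sub_eq_sub_iff_add_eq_add, ← h]
  abel

lemma posPart_add_le' (a b : E) : (a + b)⁺ ≤ a⁺ + b⁺ := by
  rw [posPart_def]
  exact sup_le (add_le_add (le_posPart a) (le_posPart b))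
    (add_nonneg (posPart_nonneg a) (posPart_nonneg b))

/-- The (not necessarily closed) order ideal generated by `u`, as an additive subgroup. -/
def latticeIdeal (u : E) : AddSubgroup E where
  carrier := {w | ∃ n : ℕ, |w| ≤ n • u}
  zero_mem' := ⟨0, by simp⟩
  add_mem' := by
    rintro a b ⟨n, hn⟩ ⟨m, hm⟩
    exact ⟨n + m, by rw [add_nsmul]; exact (abs_add_le a b).trans (add_le_add hn hm)⟩
  neg_mem' := by
    rintro a ⟨n, hn⟩
    exact ⟨n, by rwa [abs_neg]⟩

lemma latticeIdeal_solid {u : E} {a b : E} (h : |a| ≤ |b|) (hb : b ∈ latticeIdeal u) :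
    a ∈ latticeIdeal u := by
  obtain ⟨n, hn⟩ := hb
  exact ⟨n, h.trans hn⟩

lemma self_mem_latticeIdeal {u : E} (hu : 0 ≤ u) : u ∈ latticeIdeal u :=
  ⟨1, by rw [one_nsmul, abs_of_nonneg hu]⟩

/-- Hahn–Banach: a positive functional dominated by a sublinear `p` that vanishes on
nonpositive elements, attaining `p` at a given `v`. -/
lemma exists_dominated_functional (p : E → ℝ)
    (hadd : ∀ x y, p (x + y) ≤ p x + p y)
    (hhom : ∀ c : ℝ, 0 < c → ∀ x, p (c • x) = c * p x)
    (hnonneg : ∀ x, 0 ≤ p x)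
    (hzero : ∀ x, x ≤ 0 → p x = 0)
    (hbdd : ∀ x, p x ≤ ‖x‖)
    (v : E) (hv : v ≠ 0) :
    ∃ φ : E →L[ℝ] ℝ, (∀ x, φ x ≤ p x) ∧ φ v = p v ∧ (∀ g : E, 0 ≤ g → 0 ≤ φ g) := by
  set f := (LinearPMap.mkSpanSingleton (K := ℝ) v (p v) hv : E →ₗ.[ℝ] ℝ) with hfdef
  have hf : ∀ x : f.domain, f x ≤ p x := by
    rintro ⟨x, hx⟩
    obtain ⟨c, rfl⟩ := Submodule.mem_span_singleton.mp hx
    have happ : f ⟨c • v, hx⟩ = c • p v := LinearPMap.mkSpanSingleton'_apply v (p v) _ c hx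
    rw [happ, smul_eq_mul]
    rcases lt_trichotomy c 0 with hc | rfl | hc
    · exact le_trans (mul_nonpos_of_nonpos_of_nonneg hc.le (hnonneg v)) (hnonneg _)
    · simp only [zero_mul, zero_smul]
      rw [hzero 0 le_rfl]
    · rw [← hhom c hc v]
  obtain ⟨g, hg1, hg2⟩ := exists_extension_of_le_sublinear f p (fun c hc x => hhom c hc x) hadd hf
  have hgv : g v = p v := by
    have h1 := hg1 ⟨v, Submodule.mem_span_singleton_self v⟩
    have h2 := LinearPMap.mkSpanSingleton_apply ℝ ℝ (σ := RingHom.id ℝ) hv (p v)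
    exact h1.trans h2
  have hbound : ∀ x, ‖g x‖ ≤ 1 * ‖x‖ := by
    intro x
    rw [one_mul, Real.norm_eq_abs, abs_le]
    constructor
    · have : g (-x) ≤ p (-x) := hg2 (-x)
      rw [map_neg] at this
      have h2 := (hg2 (-x)).trans ((hbdd (-x)).trans (by rw [norm_neg]))
      rw [map_neg] at h2
      linarith
    · exact (hg2 x).trans (hbdd x)
  refine ⟨g.mkContinuous 1 hbound, ?_, ?_, ?_⟩
  · intro x; rw [LinearMap.mkContinuous_apply]; exact hg2 x
  · rw [LinearMap.mkContinuous_apply]; exact hgv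
  · intro w hw
    have h1 : g (-w) ≤ p (-w) := hg2 (-w)
    rw [hzero (-w) (neg_nonpos.mpr hw), map_neg] at h1
    rw [LinearMap.mkContinuous_apply]
    linarith

/-- There is a positive functional attaining the norm at a given positive vector. -/
lemma exists_positive_functional_at {u : E} (hu : 0 ≤ u) (hune : u ≠ 0) :
    ∃ ψ : E →L[ℝ] ℝ, (∀ g : E, 0 ≤ g → 0 ≤ ψ g) ∧ ψ u = ‖u‖ := by
  obtain ⟨ψ, _, h2, h3⟩ := exists_dominated_functional (fun x => ‖x⁺‖)
    (fun x y => by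
      refine le_trans (HasSolidNorm.solid (x := (x+y)⁺) (y := x⁺ + y⁺) ?_) (norm_add_le _ _)
      rw [abs_of_nonneg (posPart_nonneg _),
        abs_of_nonneg (add_nonneg (posPart_nonneg x) (posPart_nonneg y))]
      exact posPart_add_le' x y)
    (fun c hc x => by
      show ‖(c • x)⁺‖ = c * ‖x⁺‖
      rw [real_smul_posPart hc.le, norm_smul, Real.norm_eq_abs, abs_of_pos hc])
    (fun x => norm_nonneg _)
    (fun x hx => by show ‖x⁺‖ = 0; rw [posPart_eq_zero.mpr hx, norm_zero])
    (fun x => HasSolidNorm.solid (by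
      rw [abs_of_nonneg (posPart_nonneg x)]; exact posPart_le_abs' x))
    u hune
  refine ⟨ψ, h3, ?_⟩
  rw [h2, posPart_eq_self.mpr hu]

lemma real_abs_smul (c : ℝ) (w : E) : |c • w| = |c| • |w| := by
  rcases le_or_gt 0 c with hc | hc
  · rw [abs_of_nonneg hc, real_smul_abs hc]
  · rw [abs_of_neg hc]
    have h : c • w = -((-c) • w) := by rw [neg_smul, neg_neg]
    rw [h, abs_neg, real_smul_abs (by linarith)]

lemma nsmul_le_cast_smul {n : ℕ} {c : ℝ} (hnc : (n : ℝ) ≤ c) {g : E} (hg : 0 ≤ g) :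
    (n : ℕ) • g ≤ c • g := by
  rw [← Nat.cast_smul_eq_nsmul ℝ n g, ← sub_nonneg, ← sub_smul]
  exact real_smul_nonneg (by linarith) hg

lemma smul_mem_latticeIdeal {g : E} (hg : 0 ≤ g) {c : ℝ} {w : E}
    (hw : w ∈ latticeIdeal g) : c • w ∈ latticeIdeal g := by
  obtain ⟨n, hn⟩ := hw
  refine ⟨⌈|c| * n⌉₊, ?_⟩
  calc |c • w| = |c| • |w| := real_abs_smul c w
    _ ≤ |c| • ((n : ℕ) • g) := real_smul_le_smul (abs_nonneg c) hn
    _ = (|c| * n) • g := by rw [← Nat.cast_smul_eq_nsmul ℝ n g, smul_smul]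
    _ ≤ (⌈|c| * n⌉₊ : ℕ) • g := by
        rw [← Nat.cast_smul_eq_nsmul ℝ _ g, ← sub_nonneg, ← sub_smul]
        exact real_smul_nonneg (by linarith [Nat.le_ceil (|c| * n)]) hg

/-- A fixed positive nonzero vector of an irreducible semigroup is quasi-interior. -/
lemma isQuasiInteriorPoint_of_fixed [CompleteSpace E] (S : ℝ → E →L[ℝ] E)
    (hirr : ∀ f : E, 0 ≤ f → f ≠ 0 → ∀ φ : E →L[ℝ] ℝ,
      (∀ g : E, 0 ≤ g → 0 ≤ φ g) → φ ≠ 0 → ∃ t ∈ Ioi (0 : ℝ), 0 < φ (S t f))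
    (g : E) (hg : 0 ≤ g) (hgne : g ≠ 0)
    (hfix : ∀ t ∈ Ioi (0 : ℝ), S t g = g) : IsQuasiInteriorPoint g := by
  set J := latticeIdeal g with hJ
  have hJne : ((J : Set E)).Nonempty := ⟨0, J.zero_mem⟩
  have hgJ : g ∈ J := self_mem_latticeIdeal hg
  -- monotonicity of the distance to J on the positive cone
  have hmono : ∀ a b : E, 0 ≤ a → a ≤ b →
      Metric.infDist a (J : Set E) ≤ Metric.infDist b (J : Set E) := by
    intro a b ha hab
    refine le_of_forall_pos_le_add fun ε hε => ?_
    obtain ⟨w, hwJ, hwd⟩ := (Metric.infDist_lt_iff hJne).mp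
      (lt_add_of_pos_right (Metric.infDist b (J : Set E)) hε)
    have hhmem : w⁺ ⊓ a ∈ J := by
      refine latticeIdeal_solid ?_ hwJ
      rw [abs_of_nonneg (le_inf (posPart_nonneg w) ha)]
      exact le_trans inf_le_left (posPart_le_abs' w)
    have key : ‖a - w⁺ ⊓ a‖ ≤ ‖b - w‖ := by
      apply HasSolidNorm.solid
      have hn1 : 0 ≤ a - w⁺ ⊓ a := sub_nonneg.mpr inf_le_right
      rw [abs_of_nonneg hn1, inf_comm, sub_inf_eq_posPart]
      refine le_trans (posPart_mono (sub_le_sub hab (le_posPart w))) ?_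
      exact posPart_le_abs' (b - w)
    calc Metric.infDist a (J : Set E) ≤ dist a (w⁺ ⊓ a) :=
          Metric.infDist_le_dist_of_mem hhmem
      _ = ‖a - w⁺ ⊓ a‖ := by rw [dist_eq_norm]
      _ ≤ ‖b - w‖ := key
      _ = dist b w := (dist_eq_norm b w).symm
      _ ≤ Metric.infDist b (J : Set E) + ε := hwd.le
  -- scaling
  have hsmul_le : ∀ c : ℝ, 0 < c → ∀ a : E,
      Metric.infDist (c • a) (J : Set E) ≤ c * Metric.infDist a (J : Set E) := by
    intro c hc a
    refine le_of_forall_pos_le_add fun ε hε => ?_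
    obtain ⟨w, hwJ, hwd⟩ := (Metric.infDist_lt_iff hJne).mp
      (lt_add_of_pos_right (Metric.infDist a (J : Set E)) (div_pos hε hc))
    calc Metric.infDist (c • a) (J : Set E) ≤ dist (c • a) (c • w) :=
          Metric.infDist_le_dist_of_mem (smul_mem_latticeIdeal hg hwJ)
      _ = c * dist a w := by
          rw [dist_eq_norm, dist_eq_norm, ← smul_sub, norm_smul, Real.norm_eq_abs,
            abs_of_pos hc]
      _ ≤ c * (Metric.infDist a (J : Set E) + ε / c) :=
          mul_le_mul_of_nonneg_left hwd.le hc.le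
      _ = c * Metric.infDist a (J : Set E) + ε := by
          rw [mul_add]
          congr 1
          field_simp
  have hsmul : ∀ c : ℝ, 0 < c → ∀ a : E,
      Metric.infDist (c • a) (J : Set E) = c * Metric.infDist a (J : Set E) := by
    intro c hc a
    refine le_antisymm (hsmul_le c hc a) ?_
    have h1 := hsmul_le c⁻¹ (by positivity) (c • a)
    rw [inv_smul_smul₀ hc.ne'] at h1
    have h2 := mul_le_mul_of_nonneg_left h1 hc.le
    rw [← mul_assoc, mul_inv_cancel₀ hc.ne', one_mul] at h2
    exact h2
  -- everything is in the closure of J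
  have hcl : ∀ v : E, v ∈ closure (J : Set E) := by
    by_contra hcon
    push_neg at hcon
    obtain ⟨v, hv⟩ := hcon
    have hex : ∃ w : E, 0 ≤ w ∧ w ∉ closure (J : Set E) := by
      by_contra hpm
      push_neg at hpm
      have h1 : v⁺ ∈ J.topologicalClosure := hpm v⁺ (posPart_nonneg v)
      have h2 : v⁻ ∈ J.topologicalClosure := hpm v⁻ (negPart_nonneg v)
      have := AddSubgroup.sub_mem _ h1 h2
      rw [posPart_sub_negPart] at this
      exact hv this
    obtain ⟨v₀, hv₀n, hv₀⟩ := hex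
    have hv₀ne : v₀ ≠ 0 := by
      rintro rfl
      exact hv₀ (subset_closure J.zero_mem)
    set p : E → ℝ := fun x => Metric.infDist x⁺ (J : Set E) with hp
    obtain ⟨φ, hφle, hφv, hφpos⟩ := exists_dominated_functional p
      (fun x y => by
        show Metric.infDist (x + y)⁺ _ ≤ Metric.infDist x⁺ _ + Metric.infDist y⁺ _
        refine le_trans (hmono _ _ (posPart_nonneg _) (posPart_add_le' x y)) ?_
        refine le_of_forall_pos_le_add fun ε hε => ?_
        obtain ⟨w₁, hw₁J, hw₁⟩ := (Metric.infDist_lt_iff hJne).mp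
          (lt_add_of_pos_right (Metric.infDist x⁺ (J : Set E)) (half_pos hε))
        obtain ⟨w₂, hw₂J, hw₂⟩ := (Metric.infDist_lt_iff hJne).mp
          (lt_add_of_pos_right (Metric.infDist y⁺ (J : Set E)) (half_pos hε))
        calc Metric.infDist (x⁺ + y⁺) (J : Set E) ≤ dist (x⁺ + y⁺) (w₁ + w₂) :=
              Metric.infDist_le_dist_of_mem (J.add_mem hw₁J hw₂J)
          _ ≤ dist x⁺ w₁ + dist y⁺ w₂ := dist_add_add_le _ _ _ _
          _ ≤ _ := by linarith)
      (fun c hc x => by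
        show Metric.infDist (c • x)⁺ _ = c * Metric.infDist x⁺ _
        rw [real_smul_posPart hc.le, hsmul c hc])
      (fun x => Metric.infDist_nonneg)
      (fun x hx => by
        show Metric.infDist x⁺ _ = 0
        rw [posPart_eq_zero.mpr hx]
        exact Metric.infDist_zero_of_mem J.zero_mem)
      (fun x => by
        show Metric.infDist x⁺ _ ≤ ‖x‖
        calc Metric.infDist x⁺ (J : Set E) ≤ dist x⁺ 0 :=
              Metric.infDist_le_dist_of_mem J.zero_mem
          _ = ‖x⁺‖ := by rw [dist_zero_right]
          _ ≤ ‖x‖ := HasSolidNorm.solid (by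
              rw [abs_of_nonneg (posPart_nonneg x)]; exact posPart_le_abs' x))
      v₀ hv₀ne
    have hpeq : p v₀ = Metric.infDist v₀ (J : Set E) := by
      show Metric.infDist v₀⁺ _ = _
      rw [posPart_eq_self.mpr hv₀n]
    have hpv₀ : 0 < p v₀ := by
      rw [hpeq]
      rcases (Metric.infDist_nonneg (x := v₀) (s := (J : Set E))).lt_or_eq with h | h
      · exact h
      · exact absurd ((Metric.mem_closure_iff_infDist_zero hJne).mpr h.symm) hv₀
    have hφne : φ ≠ 0 := by
      intro h
      rw [h] at hφv
      simp only [ContinuousLinearMap.zero_apply] at hφv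
      exact hpv₀.ne' hφv.symm
    have hφg : φ g = 0 := by
      refine le_antisymm ?_ (hφpos g hg)
      refine le_trans (hφle g) ?_
      show Metric.infDist g⁺ _ ≤ 0
      rw [posPart_eq_self.mpr hg]
      exact (Metric.infDist_zero_of_mem hgJ).le
    obtain ⟨t, ht, hlt⟩ := hirr g hg hgne φ hφpos hφne
    rw [hfix t ht, hφg] at hlt
    exact lt_irrefl 0 hlt
  -- conclude quasi-interiority
  refine ⟨hg, fun v hv => ?_⟩
  rw [Metric.tendsto_atTop]
  intro ε hε
  obtain ⟨w, hwJ, hwd⟩ := Metric.mem_closure_iff.mp (hcl v) ε hε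
  obtain ⟨m, hm⟩ := hwJ
  refine ⟨m, fun n hn => ?_⟩
  have h1 : v - v ⊓ (n • g) = (v - n • g)⁺ := sub_inf_eq_posPart v (n • g)
  have h2 : (v - n • g)⁺ ≤ |v - w| := by
    refine le_trans (posPart_mono (sub_le_sub le_rfl (nsmul_le_nsmul_left hg hn))) ?_
    refine le_trans (posPart_mono (sub_le_sub le_rfl hm)) ?_
    refine le_trans (posPart_mono (sub_le_sub le_rfl (le_abs_self w))) ?_
    exact posPart_le_abs' (v - w)
  have h3 : ‖v - v ⊓ (n • g)‖ ≤ ‖v - w‖ := by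
    apply HasSolidNorm.solid
    rw [abs_of_nonneg (sub_nonneg.mpr inf_le_left), h1]
    exact h2
  rw [dist_eq_norm]
  calc ‖v ⊓ (n • g) - v‖ = ‖v - v ⊓ (n • g)‖ := norm_sub_rev _ _
    _ ≤ ‖v - w‖ := h3
    _ = dist v w := (dist_eq_norm v w).symm
    _ < ε := hwd

end Aux

/-- Let `S` be a positive and irreducible semigroup on a Banach lattice `E`
such that `S t f → P f` as `t → ∞` for each `f`.  Then either `P = 0` or `P = φ ⊗ u` for a
quasi-interior point `u` of `E₊` and a strictly positive functional `φ`; in the latter case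
`⟨φ, u⟩ = 1`. -/
theorem statement2
    {E : Type*} [NormedAddCommGroup E] [Lattice E] [HasSolidNorm E] [IsOrderedAddMonoid E]
    [NormedSpace ℝ E] [CompleteSpace E]
    (S : ℝ → E →L[ℝ] E)
    (hsg : ∀ s ∈ Ioi (0 : ℝ), ∀ t ∈ Ioi (0 : ℝ), S (s + t) = (S t).comp (S s))
    (hloc : ∃ C : ℝ, ∀ t ∈ Ioc (0 : ℝ) 1, ‖S t‖ ≤ C)
    (hpos : ∀ t ∈ Ioi (0 : ℝ), ∀ f : E, 0 ≤ f → 0 ≤ S t f)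
    (hirr : ∀ f : E, 0 ≤ f → f ≠ 0 → ∀ φ : E →L[ℝ] ℝ,
      (∀ g : E, 0 ≤ g → 0 ≤ φ g) → φ ≠ 0 → ∃ t ∈ Ioi (0 : ℝ), 0 < φ (S t f))
    (P : E →L[ℝ] E)
    (hP : ∀ f : E, Tendsto (fun t : ℝ => S t f) atTop (𝓝 (P f))) :
    P = 0 ∨
      ∃ (u : E) (φ : E →L[ℝ] ℝ), IsQuasiInteriorPoint u ∧
        (∀ f : E, 0 ≤ f → f ≠ 0 → 0 < φ f) ∧
        (∀ f : E, P f = φ f • u) ∧ φ u = 1 := by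
  by_cases hP0 : P = 0
  · exact Or.inl hP0
  right
  -- basic algebraic identities for P
  have hSP : ∀ t ∈ Ioi (0 : ℝ), ∀ f : E, S t (P f) = P f := by
    intro t ht f
    have h1 : Tendsto (fun s : ℝ => S t (S s f)) atTop (𝓝 (S t (P f))) :=
      ((S t).continuous.tendsto _).comp (hP f)
    have h2 : Tendsto (fun s : ℝ => S t (S s f)) atTop (𝓝 (P f)) := by
      have h3 : Tendsto (fun s : ℝ => S (s + t) f) atTop (𝓝 (P f)) :=
        (hP f).comp (Filter.tendsto_atTop_add_const_right atTop t tendsto_id)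
      refine h3.congr' ?_
      filter_upwards [eventually_gt_atTop 0] with s hs
      rw [hsg s hs t ht]; rfl
    exact tendsto_nhds_unique h1 h2
  have hPS : ∀ t ∈ Ioi (0 : ℝ), ∀ f : E, P (S t f) = P f := by
    intro t ht f
    have h2 : Tendsto (fun s : ℝ => S s (S t f)) atTop (𝓝 (P f)) := by
      have h3 : Tendsto (fun s : ℝ => S (t + s) f) atTop (𝓝 (P f)) :=
        (hP f).comp (Filter.tendsto_atTop_add_const_left atTop t tendsto_id)
      refine h3.congr' ?_
      filter_upwards [eventually_gt_atTop 0] with s hs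
      rw [hsg t ht s hs]; rfl
    exact tendsto_nhds_unique (hP (S t f)) h2
  have hPP : ∀ f : E, P (P f) = P f := by
    intro f
    have h2 : Tendsto (fun s : ℝ => S s (P f)) atTop (𝓝 (P f)) := by
      refine tendsto_const_nhds.congr' ?_
      filter_upwards [eventually_gt_atTop 0] with s hs
      exact (hSP s hs f).symm
    exact tendsto_nhds_unique (hP (P f)) h2
  have hPpos : ∀ f : E, 0 ≤ f → 0 ≤ P f := by
    intro f hf
    refine ge_of_tendsto (hP f) ?_
    filter_upwards [eventually_gt_atTop 0] with t ht
    exact hpos t ht f hf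
  have hPmono : ∀ f g : E, f ≤ g → P f ≤ P g := by
    intro f g hfg
    have := hPpos (g - f) (sub_nonneg.mpr hfg)
    rw [map_sub] at this
    exact sub_nonneg.mp this
  -- a fixed positive vector u
  obtain ⟨f₀, hf₀⟩ : ∃ f : E, P f ≠ 0 := by
    by_contra h
    push_neg at h
    exact hP0 (ContinuousLinearMap.ext fun f => by rw [h f]; rfl)
  set u : E := P |f₀| with hu_def
  have hu : 0 ≤ u := hPpos _ (abs_nonneg f₀)
  have hle1 : P f₀ ≤ u := hPmono _ _ (le_abs_self f₀)
  have hle2 : -(P f₀) ≤ u := by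
    have hneg : -|f₀| ≤ f₀ := by
      rw [neg_le]
      exact le_sup_right
    have := hPmono _ _ hneg
    rw [map_neg] at this
    exact neg_le.mpr this
  have hune : u ≠ 0 := by
    intro h
    rw [h] at hle1 hle2
    exact hf₀ (le_antisymm hle1 (by rwa [neg_nonpos] at hle2))
  have hufix : ∀ t ∈ Ioi (0 : ℝ), S t u = u := fun t ht => hSP t ht |f₀|
  have hPu : P u = u := hPP |f₀|
  -- the strictly positive fixed functional φ₀ = ψ ∘ P
  obtain ⟨ψ, hψpos, hψu⟩ := exists_positive_functional_at hu hune
  set φ₀ : E →L[ℝ] ℝ := ψ.comp P with hφ₀_def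
  have hφ₀apply : ∀ x : E, φ₀ x = ψ (P x) := fun x => rfl
  have hφ₀pos : ∀ x : E, 0 ≤ x → 0 ≤ φ₀ x := fun x hx => hψpos (P x) (hPpos x hx)
  have hφ₀S : ∀ t ∈ Ioi (0 : ℝ), ∀ x : E, φ₀ (S t x) = φ₀ x := by
    intro t ht x
    rw [hφ₀apply, hφ₀apply, hPS t ht]
  have hφ₀P : ∀ x : E, φ₀ (P x) = φ₀ x := by
    intro x
    rw [hφ₀apply, hφ₀apply, hPP]
  have hα : 0 < φ₀ u := by
    rw [hφ₀apply, hPu, hψu]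
    exact norm_pos_iff.mpr hune
  have hφ₀ne : φ₀ ≠ 0 := by
    intro h
    rw [h] at hα
    exact lt_irrefl 0 hα
  have hφ₀strict : ∀ x : E, 0 ≤ x → x ≠ 0 → 0 < φ₀ x := by
    intro x hx hxne
    rcases (hφ₀pos x hx).lt_or_eq with h | h
    · exact h
    · exfalso
      obtain ⟨t, ht, hlt⟩ := hirr x hx hxne φ₀ hφ₀pos hφ₀ne
      rw [hφ₀S t ht, ← h] at hlt
      exact lt_irrefl 0 hlt
  -- fixed vectors have fixed absolute value, positive part, negative part
  have hfix_abs : ∀ h : E, (∀ t ∈ Ioi (0 : ℝ), S t h = h) →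
      ∀ t ∈ Ioi (0 : ℝ), S t |h| = |h| := by
    intro h hh t ht
    have hmono : ∀ a b : E, a ≤ b → S t a ≤ S t b := by
      intro a b hab
      have := hpos t ht (b - a) (sub_nonneg.mpr hab)
      rw [map_sub] at this
      exact sub_nonneg.mp this
    have h1 : |h| ≤ S t |h| := by
      have ha : S t h ≤ S t |h| := hmono _ _ (le_abs_self h)
      have hb : -(S t h) ≤ S t |h| := by
        have hneg : -|h| ≤ h := by
          rw [neg_le]
          exact le_sup_right
        have := hmono _ _ hneg
        rw [map_neg] at this
        exact neg_le.mpr this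
      have habs : |S t h| = S t h ⊔ -(S t h) := rfl
      rw [hh t ht] at ha hb
      calc |h| = |S t h| := by rw [hh t ht]
        _ = S t h ⊔ -(S t h) := rfl
        _ ≤ S t |h| := by rw [hh t ht]; exact sup_le ha hb
    have h2 : φ₀ (S t |h| - |h|) = 0 := by
      rw [map_sub, hφ₀S t ht, sub_self]
    by_contra hne
    have hne' : S t |h| - |h| ≠ 0 := fun hc => hne (by rwa [sub_eq_zero] at hc)
    have := hφ₀strict _ (sub_nonneg.mpr h1) hne'
    rw [h2] at this
    exact lt_irrefl 0 this
  have hfix_pos : ∀ h : E, (∀ t ∈ Ioi (0 : ℝ), S t h = h) →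
      ∀ t ∈ Ioi (0 : ℝ), S t h⁺ = h⁺ := by
    intro h hh t ht
    have e1 : h⁺ - h⁻ = h := posPart_sub_negPart h
    have e2 : h⁺ + h⁻ = |h| := posPart_add_negPart h
    have hid : h⁺ = (1 / 2 : ℝ) • (h + |h|) := by
      have h3 : (h⁺ - h⁻) + (h⁺ + h⁻) = h + |h| := by rw [e1, e2]
      have h1 : h + |h| = h⁺ + h⁺ := by rw [← h3]; abel
      rw [h1, ← two_smul ℝ (h⁺), smul_smul]
      norm_num
    rw [hid, map_smul, map_add, hh t ht, hfix_abs h hh t ht]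
  have hfix_neg : ∀ h : E, (∀ t ∈ Ioi (0 : ℝ), S t h = h) →
      ∀ t ∈ Ioi (0 : ℝ), S t h⁻ = h⁻ := by
    intro h hh t ht
    have e1 : h⁺ - h⁻ = h := posPart_sub_negPart h
    have hid0 : h⁻ + h = h⁺ := by
      have h4 := congrArg (fun x => h⁻ + x) e1
      rw [← h4]
      abel
    have hid : h⁻ = h⁺ - h := eq_sub_of_add_eq hid0
    rw [hid, map_sub, hfix_pos h hh t ht, hh t ht]
  -- fixed vectors with φ₀ = 0 vanish
  have hsign : ∀ h : E, (∀ t ∈ Ioi (0 : ℝ), S t h = h) → φ₀ h = 0 → h = 0 := by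
    intro h hh hzero
    have hdisj : h⁺ ⊓ h⁻ = 0 := posPart_inf_negPart_eq_zero h
    have hcases : h⁺ = 0 ∨ h⁻ = 0 := by
      by_contra hc
      push_neg at hc
      obtain ⟨hp, hn⟩ := hc
      have hqin := isQuasiInteriorPoint_of_fixed S hirr h⁻ (negPart_nonneg h) hn
        (hfix_neg h hh)
      have htend := hqin.2 h⁺ (posPart_nonneg h)
      have hzero' : ∀ n : ℕ, h⁺ ⊓ (n • h⁻) = 0 := by
        intro n
        rcases Nat.eq_zero_or_pos n with rfl | hn1
        · rw [zero_nsmul]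
          exact inf_eq_right.mpr (posPart_nonneg h)
        · refine le_antisymm ?_ (le_inf (posPart_nonneg h) (nsmul_nonneg (negPart_nonneg h) n))
          have hle1 : h⁺ ⊓ (n • h⁻) ≤ (n • h⁺) ⊓ (n • h⁻) := by
            refine inf_le_inf_right _ ?_
            calc h⁺ = 1 • h⁺ := (one_nsmul _).symm
              _ ≤ n • h⁺ := nsmul_le_nsmul_left (posPart_nonneg h) hn1
          refine hle1.trans ?_
          have : (n • h⁺) ⊓ (n • h⁻) = (n : ℝ) • (h⁺ ⊓ h⁻) := by
            rw [real_smul_inf (by positivity : (0:ℝ) ≤ (n:ℝ)), Nat.cast_smul_eq_nsmul,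
              Nat.cast_smul_eq_nsmul]
          rw [this, hdisj, smul_zero]
      have h0 : Tendsto (fun n : ℕ => h⁺ ⊓ (n • h⁻)) atTop (𝓝 (0 : E)) := by
        simp only [hzero']
        exact tendsto_const_nhds
      exact hp (tendsto_nhds_unique htend h0)
    rcases hcases with hp0 | hn0
    · -- h ≤ 0
      have hh0 : h ≤ 0 := posPart_eq_zero.mp hp0
      have hnegfix : ∀ t ∈ Ioi (0 : ℝ), S t (-h) = -h := by
        intro t ht; rw [map_neg, hh t ht]
      by_contra hne
      have := hφ₀strict (-h) (neg_nonneg.mpr hh0) (neg_ne_zero.mpr hne)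
      rw [map_neg, hzero, neg_zero] at this
      exact lt_irrefl 0 this
    · have hh0 : 0 ≤ h := negPart_eq_zero.mp hn0
      by_contra hne
      have := hφ₀strict h hh0 hne
      rw [hzero] at this
      exact lt_irrefl 0 this
  -- conclusion
  have hqiu := isQuasiInteriorPoint_of_fixed S hirr u hu hune hufix
  refine ⟨u, (φ₀ u)⁻¹ • φ₀, hqiu, ?_, ?_, ?_⟩
  · intro f hf hfne
    have := hφ₀strict f hf hfne
    simp only [ContinuousLinearMap.smul_apply, smul_eq_mul]
    positivity
  · intro f
    set h : E := P f - ((φ₀ u)⁻¹ * φ₀ f) • u with hh_def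
    have hfixh : ∀ t ∈ Ioi (0 : ℝ), S t h = h := by
      intro t ht
      rw [hh_def, map_sub, map_smul, hSP t ht, hufix t ht]
    have hφ₀h : φ₀ h = 0 := by
      rw [hh_def, map_sub, map_smul, hφ₀P, smul_eq_mul, mul_assoc]
      rw [mul_comm (φ₀ f) (φ₀ u), ← mul_assoc, inv_mul_cancel₀ hα.ne', one_mul]
      exact sub_self _
    have := hsign h hfixh hφ₀h
    rw [hh_def, sub_eq_zero] at this
    rw [this]
    simp only [ContinuousLinearMap.smul_apply, smul_eq_mul]
  · simp only [ContinuousLinearMap.smul_apply, smul_eq_mul]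
    exact inv_mul_cancel₀ hα.ne'
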